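/- arXiv:1407.1108 — 6 statements merged into one kernel-verified Lean document; each statement's English description precedes it below -/
import Mathlib

section
/- For every real a and natural number n, the finite sum −(1/(2√π)) · Σ_{i=0}^{n} [Γ(i + 1/2)/Γ(i+1)] · (−2 i a² + 1)/(a² + 1)^{3/2 + i} equals −(1/√π) · (1/(1 + a²))^{n + 3/2} · Γ(n + 3/2)/Γ(n+1). -/
open Real

lemma key_sum (a : ℝ) (n : ℕ) :
    ∑ i ∈ Finset.range (n+1),
        (Real.Gamma (i + 1/2) / Real.Gamma (i + 1)) *
          ((-2 * i * a^2 + 1) / (a^2 + 1) ^ ((3:ℝ)/2 + i)) =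
    2 * (Real.Gamma ((n:ℝ) + 3/2) / Real.Gamma ((n:ℝ) + 1)) *
      (a^2 + 1) ^ (-((n:ℝ) + 3/2)) := by
  have hp : (0:ℝ) < a ^ 2 + 1 := by positivity
  induction n with
  | zero =>
      rw [Finset.sum_range_one]
      have h0 : ((0:ℕ):ℝ) = 0 := by norm_num
      rw [h0]
      rw [show (0:ℝ) + 1/2 = 1/2 by ring, show (0:ℝ) + 3/2 = 1/2 + 1 by ring,
        show (0:ℝ) + 1 = 1 by ring, Real.Gamma_one, Real.Gamma_one_half_eq,
        Real.Gamma_add_one (by norm_num : (1:ℝ)/2 ≠ 0), Real.Gamma_one_half_eq,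
        show (3:ℝ)/2 + 0 = 1/2 + 1 by ring, Real.rpow_neg hp.le]
      have hB : (a^2+1) ^ ((1:ℝ)/2 + 1) ≠ 0 := (Real.rpow_pos_of_pos hp _).ne'
      field_simp
      ring
  | succ n ih =>
      rw [Finset.sum_range_succ, ih]
      have hn1 : ((n+1:ℕ):ℝ) = (n:ℝ) + 1 := by push_cast; ring
      rw [hn1]
      have hG : 0 < Real.Gamma ((n:ℝ) + 3/2) := Real.Gamma_pos_of_pos (by positivity)
      have hGn : 0 < Real.Gamma ((n:ℝ) + 1) := Real.Gamma_pos_of_pos (by positivity)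
      have e1 : Real.Gamma ((n:ℝ) + 1 + 1/2) = Real.Gamma ((n:ℝ) + 3/2) := by rw [show (n:ℝ)+1+1/2 = (n:ℝ)+3/2 by ring]
      have e2 : Real.Gamma ((n:ℝ) + 1 + 3/2) = ((n:ℝ)+3/2) * Real.Gamma ((n:ℝ) + 3/2) := by
        rw [show (n:ℝ)+1+3/2 = ((n:ℝ)+3/2)+1 by ring,
          Real.Gamma_add_one (by positivity : ((n:ℝ)+3/2) ≠ 0)]
      have e3 : Real.Gamma ((n:ℝ) + 1 + 1) = ((n:ℝ)+1) * Real.Gamma ((n:ℝ) + 1) := by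
        rw [show (n:ℝ)+1+1 = ((n:ℝ)+1)+1 by ring,
          Real.Gamma_add_one (by positivity : ((n:ℝ)+1) ≠ 0)]
      have e4 : (a^2+1) ^ ((3:ℝ)/2 + ((n:ℝ)+1)) = (a^2+1) ^ ((n:ℝ)+3/2) * (a^2+1) := by
        rw [show (3:ℝ)/2 + ((n:ℝ)+1) = ((n:ℝ)+3/2)+1 by ring, Real.rpow_add hp,
          Real.rpow_one]
      have e5 : (a^2+1) ^ (-((n:ℝ)+1+3/2)) = ((a^2+1) ^ ((n:ℝ)+3/2) * (a^2+1))⁻¹ := by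
        rw [show -((n:ℝ)+1+3/2) = -(((n:ℝ)+3/2)+1) by ring, Real.rpow_neg hp.le,
          Real.rpow_add hp, Real.rpow_one]
      have e6 : (a^2+1) ^ (-((n:ℝ)+3/2)) = ((a^2+1) ^ ((n:ℝ)+3/2))⁻¹ := by
        rw [Real.rpow_neg hp.le]
      rw [e1, e2, e3, e4, e5, e6]
      have hB : 0 < (a^2+1) ^ ((n:ℝ)+3/2) := Real.rpow_pos_of_pos hp _
      field_simp
      ring

theorem stmt_2 (a : ℝ) (n : ℕ) :
    -(1/(2 * Real.sqrt π)) *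
      ∑ i ∈ Finset.range (n+1),
        (Real.Gamma (i + 1/2) / Real.Gamma (i + 1)) *
          ((-2 * i * a^2 + 1) / (a^2 + 1) ^ ((3:ℝ)/2 + i)) =
    -(1/Real.sqrt π) * (1/(1 + a^2)) ^ ((n:ℝ) + 3/2) *
      (Real.Gamma (n + 3/2) / Real.Gamma (n + 1)) := by
  have hp : (0:ℝ) < a ^ 2 + 1 := by positivity
  rw [key_sum]
  have h1 : (1/(1 + a^2)) ^ ((n:ℝ) + 3/2) = (a^2 + 1) ^ (-((n:ℝ) + 3/2)) := by
    rw [show (1:ℝ) + a^2 = a^2 + 1 by ring, one_div, Real.inv_rpow hp.le,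
      ← Real.rpow_neg hp.le]
  rw [h1]
  ring
end

section
/- For every real a and natural number n, the finite sum −(1/(2π√π)) · Σ_{i=0}^{n} [Γ(i + 3/2)/Γ(i+1)] · (−2 i a² + 3)/(a² + 1)^{5/2 + i} equals −(1/(π√π)) · (1/(1 + a²))^{n + 5/2} · Γ(n + 5/2)/Γ(n+1). -/
open Real

lemma key4 (a : ℝ) (n : ℕ) :
    ∑ i ∈ Finset.range (n+1),
        (Real.Gamma (i + 3/2) / Real.Gamma (i + 1)) *
          ((-2 * i * a^2 + 3) / (a^2 + 1) ^ ((5:ℝ)/2 + i)) =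
      2 * (Real.Gamma (n + 5/2) / Real.Gamma (n + 1)) *
        (1/(1 + a^2)) ^ ((n:ℝ) + 5/2) := by
  have hx : (0:ℝ) < a^2 + 1 := by positivity
  have odr : ∀ y : ℝ, ((1/(1+a^2)):ℝ) ^ y = 1 / (a^2+1) ^ y := by
    intro y
    rw [show (1+a^2) = a^2+1 by ring, one_div, Real.inv_rpow hx.le, one_div]
  induction n with
  | zero =>
      rw [Finset.sum_range_one]
      have h52 : Real.Gamma (5/2) = (3/2) * Real.Gamma (3/2) := by
        rw [show (5/2:ℝ) = 3/2 + 1 by norm_num, Real.Gamma_add_one (by norm_num)]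
      push_cast
      rw [odr]
      simp [Real.Gamma_one, h52]
      rw [div_eq_mul_inv]
      ring
  | succ n ih =>
      rw [Finset.sum_range_succ, ih]
      have hX : (0:ℝ) < (a^2+1) ^ ((n:ℝ) + 5/2) := Real.rpow_pos_of_pos hx _
      have e2 : ((a^2+1):ℝ) ^ ((5:ℝ)/2 + ((n:ℕ)+1:ℕ)) =
          (a^2+1) ^ ((n:ℝ)+5/2) * (a^2+1) := by
        rw [show ((5:ℝ)/2 + (((n:ℕ)+1:ℕ)):ℝ) = ((n:ℝ)+5/2) + 1 by push_cast; ring,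
          Real.rpow_add hx, Real.rpow_one]
      have e3 : ((1/(1+a^2)):ℝ) ^ (((n:ℕ)+1:ℕ) + 5/2 : ℝ) =
          1 / ((a^2+1) ^ ((n:ℝ)+5/2) * (a^2+1)) := by
        rw [odr, show ((((n:ℕ)+1:ℕ)) + 5/2 : ℝ) = ((n:ℝ)+5/2) + 1 by push_cast; ring,
          Real.rpow_add hx, Real.rpow_one]
      have g1 : Real.Gamma ((((n:ℕ)+1:ℕ)) + 3/2) = ((n:ℝ)+3/2) * Real.Gamma (n + 3/2) := by
        rw [show ((((n:ℕ)+1:ℕ)) + 3/2 : ℝ) = ((n:ℝ)+3/2) + 1 by push_cast; ring,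
          Real.Gamma_add_one (by positivity)]
      have g2 : Real.Gamma ((((n:ℕ)+1:ℕ)) + 5/2) = ((n:ℝ)+5/2) * Real.Gamma (n + 5/2) := by
        rw [show ((((n:ℕ)+1:ℕ)) + 5/2 : ℝ) = ((n:ℝ)+5/2) + 1 by push_cast; ring,
          Real.Gamma_add_one (by positivity)]
      have g3 : Real.Gamma ((((n:ℕ)+1:ℕ)) + 1) = ((n:ℝ)+1) * Real.Gamma (n + 1) := by
        rw [show ((((n:ℕ)+1:ℕ)) + 1 : ℝ) = ((n:ℝ)+1) + 1 by push_cast; ring,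
          Real.Gamma_add_one (by positivity)]
      have g4 : Real.Gamma ((n:ℝ) + 5/2) = ((n:ℝ)+3/2) * Real.Gamma (n + 3/2) := by
        rw [show ((n:ℝ) + 5/2 : ℝ) = ((n:ℝ)+3/2) + 1 by ring,
          Real.Gamma_add_one (by positivity)]
      have hG1 : Real.Gamma ((n:ℝ)+1) ≠ 0 := (Real.Gamma_pos_of_pos (by positivity)).ne'
      have hG3 : Real.Gamma ((n:ℝ)+3/2) ≠ 0 := (Real.Gamma_pos_of_pos (by positivity)).ne'
      rw [odr, e2, e3, g1, g2, g3, g4]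
      have hn1 : ((n:ℝ)+1) ≠ 0 := by positivity
      field_simp
      push_cast
      ring

theorem stmt_4 (a : ℝ) (n : ℕ) :
    -(1/(2 * π * Real.sqrt π)) *
      ∑ i ∈ Finset.range (n+1),
        (Real.Gamma (i + 3/2) / Real.Gamma (i + 1)) *
          ((-2 * i * a^2 + 3) / (a^2 + 1) ^ ((5:ℝ)/2 + i)) =
    -(1/(π * Real.sqrt π)) * (1/(1 + a^2)) ^ ((n:ℝ) + 5/2) *
      (Real.Gamma (n + 5/2) / Real.Gamma (n + 1)) := by
  rw [key4]
  have hπ : (π:ℝ) ≠ 0 := Real.pi_ne_zero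
  have hs : Real.sqrt π ≠ 0 := (Real.sqrt_pos.mpr Real.pi_pos).ne'
  field_simp
end

section
/- For every ε > 0 and natural number n, the integral over ℝ of Δ G^{ε,n} equals −1 in one dimension; that is, 2 ∫_0^∞ (1/(ε√π)) (1/(1 + r²/ε²))^{n + 3/2} · Γ(n + 3/2)/Γ(n+1) dr = 1. -/
open Real MeasureTheory Set Filter

private lemma base_pos (u : ℝ) : (0:ℝ) < 1 + u^2 := by positivity

private lemma hasDerivAt_F (a : ℝ) (u : ℝ) :
    HasDerivAt (fun u : ℝ => u * (1 + u^2) ^ (-a))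
      ((1 + u^2) ^ (-a) - 2*a * u^2 * (1 + u^2) ^ (-a-1)) u := by
  have h1 : HasDerivAt (fun u : ℝ => 1 + u^2) (2*u) u := by
    simpa using ((hasDerivAt_pow 2 u).const_add 1)
  have h2 : HasDerivAt (fun u : ℝ => (1 + u^2) ^ (-a))
      (2 * u * (-a) * (1 + u^2) ^ (-a-1)) u := by
    exact h1.rpow_const (Or.inl (base_pos u).ne')
  have := (hasDerivAt_id u).mul h2
  refine this.congr_deriv (Eq.symm ?_)
  simp [id]; ring

private lemma integrable_aux {a : ℝ} (ha : 1 ≤ a) :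
    IntegrableOn (fun u : ℝ => (1 + u^2) ^ (-a)) (Ioi (0:ℝ)) := by
  apply Integrable.mono' (integrable_inv_one_add_sq.integrableOn)
  · apply Continuous.aestronglyMeasurable
    apply Continuous.rpow_const (by continuity)
    intro x; exact Or.inl (base_pos x).ne'
  · filter_upwards with u
    rw [norm_of_nonneg (rpow_nonneg (base_pos u).le _), ← rpow_neg_one (1 + u^2)]
    apply rpow_le_rpow_of_exponent_le ?_ (by linarith)
    nlinarith [sq_nonneg u]

private lemma tendsto_F {a : ℝ} (ha : 1 ≤ a) :
    Tendsto (fun u : ℝ => u * (1 + u^2) ^ (-a)) atTop (nhds 0) := by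
  apply squeeze_zero' ?_ ?_ tendsto_inv_atTop_zero
  · filter_upwards [eventually_gt_atTop 0] with u hu
    positivity
  · filter_upwards [eventually_gt_atTop 0] with u hu
    have h1 : u * (1 + u^2) ^ (-a) ≤ u * (1 + u^2) ^ (-1 : ℝ) := by
      apply mul_le_mul_of_nonneg_left ?_ hu.le
      exact rpow_le_rpow_of_exponent_le (by nlinarith [sq_nonneg u]) (by linarith)
    refine h1.trans ?_
    rw [rpow_neg_one]
    rw [← div_eq_mul_inv, ← one_div, div_le_div_iff₀ (base_pos u) hu]
    nlinarith

private lemma J_base : ∫ u in Ioi (0:ℝ), (1 + u^2) ^ (-(3/2 : ℝ)) = 1 := by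
  have key := integral_Ioi_of_hasDerivAt_of_tendsto
    (f := fun u : ℝ => u * (1 + u^2) ^ (-(1/2:ℝ)))
    (f' := fun u : ℝ => (1 + u^2) ^ (-(3/2:ℝ))) (a := 0) (m := 1)
    ?_ ?_ ?_ ?_
  · simpa using key
  · exact ((hasDerivAt_F (1/2) 0).continuousAt).continuousWithinAt
  · intro x hx
    have := hasDerivAt_F (1/2) x
    refine this.congr_deriv (Eq.symm ?_)
    have hb := base_pos x
    have e1 : (1 + x^2) ^ (-(1/2:ℝ)-1) = (1 + x^2) ^ (-(3/2:ℝ)) := by norm_num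
    have e2 : (1 + x^2) ^ (-(1/2:ℝ)) = (1 + x^2) * (1 + x^2) ^ (-(3/2:ℝ)) := by
      rw [← rpow_one_add' hb.le (by norm_num : (1:ℝ) + -(3/2) ≠ 0)]
      norm_num
    rw [e1, e2]; ring
  · exact integrable_aux (by norm_num)
  · -- tendsto u * (1+u²)^{-1/2} → 1
    have h : ∀ u : ℝ, 0 < u → u * (1 + u^2) ^ (-(1/2:ℝ)) = (1/u^2 + 1) ^ (-(1/2:ℝ)) := by
      intro u hu
      have h2 : ((u^2:ℝ)) ^ (1/2:ℝ) = u := by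
        rw [← rpow_natCast u 2, ← rpow_mul hu.le]
        norm_num
      have h3 : (1/u^2 + 1 : ℝ) = (1+u^2)/u^2 := by field_simp
      rw [h3, div_rpow (base_pos u).le (sq_nonneg u), rpow_neg (sq_nonneg u), h2, div_inv_eq_mul]
      ring
    have lim : Tendsto (fun u : ℝ => (1/u^2 + 1 : ℝ) ^ (-(1/2:ℝ))) atTop (nhds 1) := by
      have h1 : Tendsto (fun u : ℝ => 1/u^2 + 1) atTop (nhds 1) := by
        have h0 : Tendsto (fun u:ℝ => u^2) atTop atTop := tendsto_pow_atTop two_ne_zero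
        have h2 := h0.inv_tendsto_atTop
        simpa [one_div] using h2.add_const 1
      have := (Real.continuousAt_rpow_const 1 (-(1/2:ℝ)) (Or.inl one_ne_zero)).tendsto.comp h1
      simpa [Function.comp_def] using this
    exact lim.congr' (by filter_upwards [eventually_gt_atTop 0] with u hu; exact (h u hu).symm)

private lemma rpow_split {a : ℝ} (ha : a ≠ 0) (u : ℝ) :
    u^2 * (1 + u^2) ^ (-a-1) = (1 + u^2) ^ (-a) - (1 + u^2) ^ (-a-1) := by
  have hb := base_pos u
  have h1 : (1 + u^2) * (1 + u^2) ^ (-a-1) = (1 + u^2) ^ (1 + (-a-1)) :=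
    (rpow_one_add' hb.le (by intro h; apply ha; linarith)).symm
  rw [show (1:ℝ) + (-a-1) = -a by ring] at h1
  nlinarith [h1]

private lemma J_step {a : ℝ} (ha : 1 ≤ a) :
    ∫ u in Ioi (0:ℝ), (1 + u^2) ^ (-(a+1)) =
      (2*a-1)/(2*a) * ∫ u in Ioi (0:ℝ), (1 + u^2) ^ (-a) := by
  have ha0 : (0:ℝ) < 2*a := by linarith
  have key := integral_Ioi_of_hasDerivAt_of_tendsto
    (f := fun u : ℝ => u * (1 + u^2) ^ (-a))
    (f' := fun u : ℝ => (1-2*a) * (1 + u^2) ^ (-a) + (2*a) * (1 + u^2) ^ (-(a+1)))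
    (a := 0) (m := 0) ?_ ?_ ?_ (tendsto_F ha)
  · have h0 : (∫ u in Ioi (0:ℝ), ((1-2*a) * (1 + u^2) ^ (-a) + (2*a) * (1 + u^2) ^ (-(a+1)))) = 0 := by
      rw [key]; norm_num
    rw [integral_add ((integrable_aux ha).const_mul _)
      ((integrable_aux (by linarith : (1:ℝ) ≤ a+1)).const_mul _),
      integral_const_mul, integral_const_mul] at h0
    rw [div_mul_eq_mul_div, eq_div_iff ha0.ne']
    linarith
  · exact ((hasDerivAt_F a 0).continuousAt).continuousWithinAt
  · intro x hx
    have h := hasDerivAt_F a x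
    refine h.congr_deriv (Eq.symm ?_)
    have hsplit := rpow_split (by linarith : a ≠ 0) x
    have e : -(a+1) = -a-1 := by ring
    rw [e]
    linear_combination (2*a) * hsplit
  · apply Integrable.add ((integrable_aux ha).const_mul _)
      ((integrable_aux (by linarith : (1:ℝ) ≤ a+1)).const_mul _)

private lemma J_val (n : ℕ) :
    ∫ u in Ioi (0:ℝ), (1 + u^2) ^ (-((n:ℝ)+3/2)) =
      Real.sqrt π / 2 * (Real.Gamma ((n:ℝ)+1) / Real.Gamma ((n:ℝ)+3/2)) := by
  induction n with
  | zero =>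
      have h32 : Real.Gamma (3/2 : ℝ) = Real.sqrt π / 2 := by
        have : (3/2 : ℝ) = 1/2 + 1 := by norm_num
        rw [this, Real.Gamma_add_one (by norm_num), Real.Gamma_one_half_eq]
        ring
      simp only [Nat.cast_zero, zero_add]
      rw [J_base]
      have hs : Real.sqrt π ≠ 0 := by positivity
      rw [h32]
      field_simp [Real.Gamma_one]
      exact Real.Gamma_one.symm
  | succ k ih =>
      have ha : (1:ℝ) ≤ (k:ℝ) + 3/2 := by
        have := Nat.cast_nonneg (α := ℝ) k; linarith
      have p1 : 0 < Real.Gamma ((k:ℝ)+3/2) := Real.Gamma_pos_of_pos (by positivity)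
      have p2 : (0:ℝ) < (k:ℝ) + 3/2 := by positivity
      have p3 : (0:ℝ) < (k:ℝ) + 1 := by positivity
      push_cast
      rw [show -((k:ℝ)+1+3/2) = -(((k:ℝ)+3/2)+1) by ring,
        show ((k:ℝ)+1+3/2) = ((k:ℝ)+3/2) + 1 by ring,
        show ((k:ℝ)+1+1) = ((k:ℝ)+1) + 1 by ring,
        J_step ha, ih, Real.Gamma_add_one p2.ne', Real.Gamma_add_one p3.ne']
      field_simp
      ring

theorem stmt_5 (ε : ℝ) (hε : 0 < ε) (n : ℕ) :
    2 * ∫ r in Set.Ioi (0:ℝ),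
        (1/(ε * Real.sqrt π)) * (1/(1 + r^2/ε^2)) ^ ((n:ℝ) + 3/2) *
          (Real.Gamma (n + 3/2) / Real.Gamma (n + 1)) = 1 := by
  have hA : 0 < Real.Gamma ((n:ℝ) + 3/2) := Real.Gamma_pos_of_pos (by positivity)
  have hB : 0 < Real.Gamma ((n:ℝ) + 1) := Real.Gamma_pos_of_pos (by positivity)
  have hs : 0 < Real.sqrt π := Real.sqrt_pos.mpr Real.pi_pos
  have hrw : ∀ r : ℝ,
      (1/(ε * Real.sqrt π)) * (1/(1 + r^2/ε^2)) ^ ((n:ℝ) + 3/2) *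
          (Real.Gamma ((n:ℝ) + 3/2) / Real.Gamma ((n:ℝ) + 1)) =
        ((1/(ε * Real.sqrt π)) * (Real.Gamma ((n:ℝ) + 3/2) / Real.Gamma ((n:ℝ) + 1))) *
          (1 + (ε⁻¹ * r)^2) ^ (-((n:ℝ) + 3/2)) := by
    intro r
    have h1 : (1:ℝ) + (ε⁻¹*r)^2 = 1 + r^2/ε^2 := by
      rw [mul_pow]; field_simp
    have hpos : (0:ℝ) < 1 + r^2/ε^2 := by positivity
    have h2 : (1/(1 + r^2/ε^2)) ^ ((n:ℝ)+3/2) = (1 + r^2/ε^2) ^ (-((n:ℝ)+3/2)) := by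
      rw [one_div, Real.inv_rpow hpos.le, ← Real.rpow_neg hpos.le]
    rw [h1, h2]; ring
  simp_rw [hrw]
  rw [integral_const_mul]
  have hsub := integral_comp_mul_left_Ioi
    (fun u : ℝ => (1+u^2) ^ (-((n:ℝ)+3/2))) 0 (inv_pos.mpr hε)
  simp only [mul_zero] at hsub
  rw [hsub, J_val n, inv_inv, smul_eq_mul]
  field_simp
end

section
/- For every ε > 0 and every r ≠ 0, the 1D Laplacian Δ G^{ε,n}(r) = −(ε^{2n+2}/√π) (1/(ε² + r²))^{n + 3/2} Γ(n + 3/2)/Γ(n+1) tends to 0 as n → ∞. -/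
open Real Filter

theorem stmt_8 (ε r : ℝ) (hε : 0 < ε) (hr : r ≠ 0) :
    Filter.Tendsto
      (fun n : ℕ =>
        -(ε^(2*n+2)/Real.sqrt π) * (1/(ε^2 + r^2)) ^ ((n:ℝ) + 3/2) *
          (Real.Gamma (n + 3/2) / Real.Gamma (n + 1)))
      Filter.atTop (nhds 0) := by
  set A : ℝ := ε^2 + r^2 with hA
  have hA0 : 0 < A := by positivity
  set q : ℝ := ε^2 / A with hq
  have hq0 : 0 ≤ q := by positivity
  have hq1 : q < 1 := by
    rw [hq, div_lt_one hA0, hA]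
    have : 0 < r^2 := by positivity
    linarith
  have key : Tendsto (fun n : ℕ =>
      (1/Real.sqrt π) * A ^ (-(1:ℝ)/2) * (((n:ℝ)+1) * q^(n+1))) atTop (nhds 0) := by
    have h1 : Tendsto (fun n : ℕ => (n : ℝ) * q ^ n) atTop (nhds 0) :=
      tendsto_self_mul_const_pow_of_lt_one hq0 hq1
    have h2 : Tendsto (fun n : ℕ => ((n+1 : ℕ) : ℝ) * q ^ (n+1)) atTop (nhds 0) :=
      h1.comp (tendsto_add_atTop_nat 1)
    have h3 : Tendsto (fun n : ℕ => ((n:ℝ)+1) * q ^ (n+1)) atTop (nhds 0) := by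
      convert h2 using 2 with n; push_cast; ring
    simpa using h3.const_mul ((1/Real.sqrt π) * A ^ (-(1:ℝ)/2))
  refine squeeze_zero_norm' ?_ key
  filter_upwards [eventually_ge_atTop 1] with n hn
  have hn1 : (1:ℝ) ≤ (n:ℝ) := by exact_mod_cast hn
  have hΓ1 : 0 < Real.Gamma ((n:ℝ) + 1) := Real.Gamma_pos_of_pos (by linarith)
  have hΓ2 : 0 < Real.Gamma ((n:ℝ) + 3/2) := Real.Gamma_pos_of_pos (by linarith)
  have hΓle : Real.Gamma ((n:ℝ) + 3/2) ≤ ((n:ℝ)+1) * Real.Gamma ((n:ℝ)+1) := by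
    have h2 : Real.Gamma ((n:ℝ) + 3/2) ≤ Real.Gamma ((n:ℝ) + 2) := by
      refine (Real.Gamma_strictMonoOn_Ici ?_ ?_ (by norm_num)).le
      · simp only [Set.mem_Ici]; linarith
      · simp only [Set.mem_Ici]; linarith
    have h3 : Real.Gamma ((n:ℝ) + 2) = ((n:ℝ)+1) * Real.Gamma ((n:ℝ)+1) := by
      rw [show (n:ℝ)+2 = ((n:ℝ)+1)+1 by ring, Real.Gamma_add_one (by positivity)]
    linarith
  have hE : Real.Gamma ((n:ℝ) + 3/2) / Real.Gamma ((n:ℝ)+1) ≤ (n:ℝ)+1 := by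
    rw [div_le_iff₀ hΓ1]; exact hΓle
  have hsplit : (1/A) ^ ((n:ℝ) + 3/2) = (1/A)^(n+1) * A ^ (-(1:ℝ)/2) := by
    rw [show ((n:ℝ)+3/2) = ((n+1 : ℕ) : ℝ) + 1/2 by push_cast; ring,
      Real.rpow_add (by positivity), Real.rpow_natCast]
    congr 1
    rw [one_div, ← Real.rpow_neg_one, ← Real.rpow_mul hA0.le]
    norm_num
  have hpow : ε^(2*n+2) * (1/A)^(n+1) = q^(n+1) := by
    rw [show 2*n+2 = 2*(n+1) by ring, pow_mul, ← mul_pow, hq]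
    ring_nf
  have hnorm : ‖-(ε^(2*n+2)/Real.sqrt π) * (1/A) ^ ((n:ℝ) + 3/2) *
      (Real.Gamma ((n:ℝ) + 3/2) / Real.Gamma ((n:ℝ) + 1))‖
      = (ε^(2*n+2)/Real.sqrt π) * (1/A) ^ ((n:ℝ) + 3/2) *
      (Real.Gamma ((n:ℝ) + 3/2) / Real.Gamma ((n:ℝ) + 1)) := by
    rw [Real.norm_eq_abs, abs_mul, abs_mul, abs_neg, abs_of_nonneg (by positivity),
      abs_of_nonneg (by positivity), abs_of_nonneg (by positivity)]
  rw [hnorm, hsplit]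
  have hfinal : (ε^(2*n+2)/Real.sqrt π) * ((1/A)^(n+1) * A ^ (-(1:ℝ)/2)) *
      (Real.Gamma ((n:ℝ) + 3/2) / Real.Gamma ((n:ℝ) + 1))
      ≤ (1/Real.sqrt π) * A ^ (-(1:ℝ)/2) * (((n:ℝ)+1) * q^(n+1)) := by
    have h1 : (ε^(2*n+2)/Real.sqrt π) * ((1/A)^(n+1) * A ^ (-(1:ℝ)/2))
        = (1/Real.sqrt π) * A ^ (-(1:ℝ)/2) * q^(n+1) := by
      rw [← hpow]; ring
    rw [h1]
    have hc : 0 ≤ (1/Real.sqrt π) * A ^ (-(1:ℝ)/2) * q^(n+1) := by positivity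
    calc (1/Real.sqrt π) * A ^ (-(1:ℝ)/2) * q^(n+1) *
        (Real.Gamma ((n:ℝ) + 3/2) / Real.Gamma ((n:ℝ) + 1))
        ≤ (1/Real.sqrt π) * A ^ (-(1:ℝ)/2) * q^(n+1) * ((n:ℝ)+1) :=
          mul_le_mul_of_nonneg_left hE hc
      _ = (1/Real.sqrt π) * A ^ (-(1:ℝ)/2) * (((n:ℝ)+1) * q^(n+1)) := by ring
  exact hfinal
end

section
/- For every z with 0 < z < 1, the series 2 Σ_{i=1}^{∞} binom(1/2, i) (−1)^i (z^{i − 1/2} − 1) converges and equals 2(1 − √z/(1 + √(1 − z))). -/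
open Real

noncomputable def genBinom (α : ℝ) (i : ℕ) : ℝ :=
  (∏ k ∈ Finset.range i, (α - k)) / (Nat.factorial i)

/-- `aseq n = ∏_{k<n} (2k+1)/(2k+2)`, i.e. the central binomial coefficient over `4^n`. -/
noncomputable def aseq (n : ℕ) : ℝ :=
  ∏ k ∈ Finset.range n, ((2 * (k : ℝ) + 1) / (2 * k + 2))

lemma aseq_zero : aseq 0 = 1 := by simp [aseq]

lemma aseq_succ (n : ℕ) : aseq (n + 1) = aseq n * ((2 * n + 1) / (2 * n + 2)) := by
  rw [aseq, aseq, Finset.prod_range_succ]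

lemma aseq_pos (n : ℕ) : 0 < aseq n := by
  induction n with
  | zero => simp [aseq_zero]
  | succ n ih =>
    rw [aseq_succ]
    positivity

lemma aseq_le_one (n : ℕ) : aseq n ≤ 1 := by
  induction n with
  | zero => simp [aseq_zero]
  | succ n ih =>
    rw [aseq_succ]
    have h1 : (2 * (n : ℝ) + 1) / (2 * n + 2) ≤ 1 := by
      rw [div_le_one (by positivity)]; linarith
    calc aseq n * ((2 * n + 1) / (2 * n + 2)) ≤ 1 * 1 := by
          apply mul_le_mul ih h1 (by positivity) (by norm_num)
      _ = 1 := by ring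

/-- The key recurrence in "real" form: `(k+1) a_{k+1} = (k+1/2) a_k`. -/
lemma aseq_rec (k : ℕ) : ((k : ℝ) + 1) * aseq (k + 1) = ((k : ℝ) + 1 / 2) * aseq k := by
  rw [aseq_succ]
  have h : (2 * (k : ℝ) + 2) ≠ 0 := by positivity
  field_simp

lemma aseq_sq_le (n : ℕ) : aseq n ^ 2 ≤ 1 / (2 * (n : ℝ) + 1) := by
  induction n with
  | zero => simp [aseq_zero]
  | succ n ih =>
    rw [aseq_succ, mul_pow]
    have h2 : (0 : ℝ) < 2 * (n : ℝ) + 2 := by positivity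
    have h1 : (0 : ℝ) < 2 * (n : ℝ) + 1 := by positivity
    have key : ((2 * (n : ℝ) + 1) / (2 * n + 2)) ^ 2 * (1 / (2 * (n : ℝ) + 1)) ≤
        1 / (2 * ((n : ℝ) + 1) + 1) := by
      rw [div_pow, div_mul_div_comm, div_le_div_iff₀ (by positivity) (by positivity)]
      nlinarith
    have hcast : ((n + 1 : ℕ) : ℝ) = (n : ℝ) + 1 := by push_cast; ring
    rw [hcast]
    calc aseq n ^ 2 * ((2 * (n : ℝ) + 1) / (2 * n + 2)) ^ 2
        ≤ (1 / (2 * (n : ℝ) + 1)) * ((2 * (n : ℝ) + 1) / (2 * n + 2)) ^ 2 := by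
          apply mul_le_mul_of_nonneg_right ih (by positivity)
      _ = ((2 * (n : ℝ) + 1) / (2 * n + 2)) ^ 2 * (1 / (2 * (n : ℝ) + 1)) := by ring
      _ ≤ 1 / (2 * ((n : ℝ) + 1) + 1) := key

lemma aseq_tendsto_zero : Filter.Tendsto aseq Filter.atTop (nhds 0) := by
  have hub : ∀ n : ℕ, aseq n ≤ (Real.sqrt (2 * (n : ℝ) + 1))⁻¹ := by
    intro n
    have h := aseq_sq_le n
    rw [one_div] at h
    have h0 : 0 ≤ aseq n := (aseq_pos n).le
    calc aseq n = Real.sqrt (aseq n ^ 2) := (Real.sqrt_sq h0).symm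
      _ ≤ Real.sqrt ((2 * (n : ℝ) + 1)⁻¹) := Real.sqrt_le_sqrt h
      _ = (Real.sqrt (2 * (n : ℝ) + 1))⁻¹ := Real.sqrt_inv _
  have hat : Filter.Tendsto (fun n : ℕ => 2 * (n : ℝ) + 1) Filter.atTop Filter.atTop := by
    apply Filter.tendsto_atTop_add_const_right
    exact Filter.Tendsto.const_mul_atTop (by norm_num) tendsto_natCast_atTop_atTop
  have hsq : Filter.Tendsto (fun x : ℝ => Real.sqrt x) Filter.atTop Filter.atTop := by
    simp_rw [Real.sqrt_eq_rpow]
    exact tendsto_rpow_atTop (by norm_num)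
  have hlim : Filter.Tendsto (fun n : ℕ => (Real.sqrt (2 * (n : ℝ) + 1))⁻¹)
      Filter.atTop (nhds 0) := Filter.Tendsto.inv_tendsto_atTop (hsq.comp hat)
  exact squeeze_zero (fun n => (aseq_pos n).le) hub hlim

lemma conv_sym (n : ℕ) :
    2 * ∑ k ∈ Finset.range (n + 1), (k : ℝ) * aseq k * aseq (n - k) =
    (n : ℝ) * ∑ k ∈ Finset.range (n + 1), aseq k * aseq (n - k) := by
  have hrefl : ∑ k ∈ Finset.range (n + 1), (k : ℝ) * aseq k * aseq (n - k) =
      ∑ k ∈ Finset.range (n + 1), ((n - k : ℕ) : ℝ) * aseq (n - k) * aseq k := by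
    rw [← Finset.sum_range_reflect (fun k => (k : ℝ) * aseq k * aseq (n - k)) (n + 1)]
    apply Finset.sum_congr rfl
    intro k hk
    rw [Finset.mem_range] at hk
    have hk' : k ≤ n := Nat.lt_succ_iff.mp hk
    have e1 : n + 1 - 1 - k = n - k := by omega
    have e2 : n - (n - k) = k := by omega
    rw [e1, e2]
  have h2 : 2 * ∑ k ∈ Finset.range (n + 1), (k : ℝ) * aseq k * aseq (n - k) =
      (∑ k ∈ Finset.range (n + 1), (k : ℝ) * aseq k * aseq (n - k)) +
      (∑ k ∈ Finset.range (n + 1), ((n - k : ℕ) : ℝ) * aseq (n - k) * aseq k) := by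
    rw [← hrefl]; ring
  rw [h2, ← Finset.sum_add_distrib, Finset.mul_sum]
  apply Finset.sum_congr rfl
  intro k hk
  rw [Finset.mem_range] at hk
  have hk' : k ≤ n := Nat.lt_succ_iff.mp hk
  rw [Nat.cast_sub hk']
  ring

lemma conv_shift (n : ℕ) :
    ∑ k ∈ Finset.range (n + 2), (k : ℝ) * aseq k * aseq (n + 1 - k) =
    (∑ k ∈ Finset.range (n + 1), (k : ℝ) * aseq k * aseq (n - k)) +
    (∑ k ∈ Finset.range (n + 1), aseq k * aseq (n - k)) / 2 := by
  rw [Finset.sum_range_succ' (fun k => (k : ℝ) * aseq k * aseq (n + 1 - k)) (n + 1)]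
  simp only [Nat.cast_zero, zero_mul, add_zero, Nat.cast_add, Nat.cast_one]
  have hcong : ∀ k ∈ Finset.range (n + 1),
      ((k : ℝ) + 1) * aseq (k + 1) * aseq (n + 1 - (k + 1)) =
      (k : ℝ) * aseq k * aseq (n - k) + (aseq k * aseq (n - k)) / 2 := by
    intro k hk
    have hrec := aseq_rec k
    have hnk : n + 1 - (k + 1) = n - k := by omega
    rw [hnk, hrec]
    ring
  rw [Finset.sum_congr rfl hcong, Finset.sum_add_distrib, Finset.sum_div]

/-- Convolution identity: `∑_{k≤n} a_k a_{n-k} = 1`. -/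
lemma aseq_conv (n : ℕ) : ∑ k ∈ Finset.range (n + 1), aseq k * aseq (n - k) = 1 := by
  induction n with
  | zero => simp [aseq_zero]
  | succ n ih =>
    have h1 := conv_sym (n + 1)
    have h2 := conv_shift n
    have h3 := conv_sym n
    rw [ih] at h2 h3
    push_cast at h1
    have hn1 : (0 : ℝ) < (n : ℝ) + 1 := by positivity
    nlinarith [h1, h2, h3]

lemma genBinom_succ (α : ℝ) (n : ℕ) :
    genBinom α (n + 1) = genBinom α n * ((α - n) / (n + 1)) := by
  unfold genBinom
  rw [Finset.prod_range_succ, Nat.factorial_succ, Nat.cast_mul, Nat.cast_add, Nat.cast_one,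
    div_mul_div_comm]
  ring

/-- `genBinom (1/2) (i+1) = (-1)^i * aseq i / (2i+2)`. -/
lemma genBinom_half (i : ℕ) :
    genBinom (1/2) (i + 1) = (-1) ^ i * (aseq i / (2 * i + 2)) := by
  induction i with
  | zero =>
    simp [genBinom, aseq_zero, Finset.prod_range_one]
  | succ i ih =>
    rw [genBinom_succ, ih, aseq_succ]
    have h2 : ((i : ℝ) + 1 + 1) ≠ 0 := by positivity
    have h3 : (2 * (i : ℝ) + 2) ≠ 0 := by positivity
    have h4 : (2 * ((i : ℝ) + 1) + 2) ≠ 0 := by positivity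
    push_cast
    rw [pow_succ]
    field_simp
    ring

/-- `HasSum (fun i => aseq i / (2*i+2)) 1`: the boundary series. -/
lemma hasSum_E : HasSum (fun i : ℕ => aseq i / (2 * (i : ℝ) + 2)) 1 := by
  have htel : ∀ i : ℕ, aseq i / (2 * (i : ℝ) + 2) = aseq i - aseq (i + 1) := by
    intro i
    rw [aseq_succ]
    have h3 : (2 * (i : ℝ) + 2) ≠ 0 := by positivity
    field_simp
    ring
  have hpartial : ∀ n : ℕ,
      ∑ i ∈ Finset.range n, (aseq i / (2 * (i : ℝ) + 2)) = 1 - aseq n := by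
    intro n
    calc ∑ i ∈ Finset.range n, (aseq i / (2 * (i : ℝ) + 2))
        = ∑ i ∈ Finset.range n, (aseq i - aseq (i + 1)) :=
          Finset.sum_congr rfl (fun i _ => htel i)
      _ = aseq 0 - aseq n := Finset.sum_range_sub' aseq n
      _ = 1 - aseq n := by rw [aseq_zero]
  have hnonneg : ∀ i : ℕ, 0 ≤ aseq i / (2 * (i : ℝ) + 2) := by
    intro i
    apply div_nonneg (aseq_pos i).le (by positivity)
  have hsummable : Summable (fun i : ℕ => aseq i / (2 * (i : ℝ) + 2)) := by
    apply summable_of_sum_range_le (c := 1) hnonneg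
    intro n
    rw [hpartial n]
    have := (aseq_pos n).le
    linarith
  have htends : Filter.Tendsto (fun n => ∑ i ∈ Finset.range n, (aseq i / (2 * (i : ℝ) + 2)))
      Filter.atTop (nhds 1) := by
    simp_rw [hpartial]
    have h1 : Filter.Tendsto (fun n : ℕ => 1 - aseq n) Filter.atTop (nhds (1 - 0)) :=
      Filter.Tendsto.sub tendsto_const_nhds aseq_tendsto_zero
    simpa using h1
  have hh := hsummable.hasSum
  have heq : (∑' i, aseq i / (2 * (i : ℝ) + 2)) = 1 :=
    tendsto_nhds_unique hh.tendsto_sum_nat htends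
  rwa [heq] at hh

/-- `∑ a_n z^n = 1/√(1-z)` for `0 < z < 1`. -/
lemma hasSum_aseq_pow (z : ℝ) (hz0 : 0 < z) (hz1 : z < 1) :
    HasSum (fun n : ℕ => aseq n * z ^ n) (1 / Real.sqrt (1 - z)) := by
  have hnorm : Summable (fun n : ℕ => ‖aseq n * z ^ n‖) := by
    apply Summable.of_nonneg_of_le (fun n => norm_nonneg _)
      (fun n => ?_) (summable_geometric_of_lt_one hz0.le hz1)
    rw [norm_mul, norm_pow]
    have h1 : ‖aseq n‖ = aseq n := abs_of_pos (aseq_pos n)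
    have h2 : ‖z‖ = z := abs_of_pos hz0
    rw [h1, h2]
    calc aseq n * z ^ n ≤ 1 * z ^ n := by
          apply mul_le_mul_of_nonneg_right (aseq_le_one n) (by positivity)
      _ = z ^ n := one_mul _
  have hsummable : Summable (fun n : ℕ => aseq n * z ^ n) := hnorm.of_norm
  set A := ∑' n, aseq n * z ^ n with hA
  have hAnonneg : 0 ≤ A :=
    tsum_nonneg (fun n => mul_nonneg (aseq_pos n).le (by positivity))
  have hsq : A * A = (1 - z)⁻¹ := by
    rw [hA, tsum_mul_tsum_eq_tsum_sum_range_of_summable_norm hnorm hnorm]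
    have hinner : ∀ n : ℕ,
        ∑ k ∈ Finset.range (n + 1), (aseq k * z ^ k) * (aseq (n - k) * z ^ (n - k)) = z ^ n := by
      intro n
      have hc : ∀ k ∈ Finset.range (n + 1),
          (aseq k * z ^ k) * (aseq (n - k) * z ^ (n - k)) = (aseq k * aseq (n - k)) * z ^ n := by
        intro k hk
        rw [Finset.mem_range] at hk
        have hk' : k ≤ n := Nat.lt_succ_iff.mp hk
        have hzz : z ^ k * z ^ (n - k) = z ^ n := by
          rw [← pow_add]
          congr 1
          omega
        calc (aseq k * z ^ k) * (aseq (n - k) * z ^ (n - k))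
            = (aseq k * aseq (n - k)) * (z ^ k * z ^ (n - k)) := by ring
          _ = (aseq k * aseq (n - k)) * z ^ n := by rw [hzz]
      rw [Finset.sum_congr rfl hc, ← Finset.sum_mul, aseq_conv, one_mul]
    rw [tsum_congr hinner]
    exact tsum_geometric_of_lt_one hz0.le hz1
  have h1z : (0 : ℝ) < 1 - z := by linarith
  have hAval : A = 1 / Real.sqrt (1 - z) := by
    have h2 : A = Real.sqrt (A * A) := (Real.sqrt_mul_self hAnonneg).symm
    rw [h2, hsq, Real.sqrt_inv, one_div]
  rw [← hAval]
  exact hsummable.hasSum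

theorem stmt_10 (z : ℝ) (hz0 : 0 < z) (hz1 : z < 1) :
    HasSum
      (fun i : ℕ =>
        2 * genBinom (1/2) (i+1) * (-1)^(i+1) * (z ^ ((i:ℝ) + 1 - 1/2) - 1))
      (2 * (1 - Real.sqrt z / (1 + Real.sqrt (1 - z)))) := by
  have h1z : (0 : ℝ) < 1 - z := by linarith
  set E : ℕ → ℝ := fun i => aseq i / (2 * (i : ℝ) + 2) with hE
  -- rewrite the general term
  have hterm : ∀ i : ℕ,
      2 * genBinom (1/2) (i+1) * (-1)^(i+1) * (z ^ ((i:ℝ) + 1 - 1/2) - 1) =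
      2 * E i - 2 * Real.sqrt z * (E i * z ^ i) := by
    intro i
    have hgb := genBinom_half i
    have hrpow : z ^ ((i:ℝ) + 1 - 1/2) = z ^ i * Real.sqrt z := by
      have he : ((i:ℝ) + 1 - 1/2) = (i : ℝ) + (1/2 : ℝ) := by ring
      rw [he, Real.rpow_add hz0, Real.rpow_natCast, ← Real.sqrt_eq_rpow]
    rw [hgb, hrpow]
    have hsign : (-1 : ℝ) ^ i * (-1 : ℝ) ^ (i + 1) = -1 := by
      rw [pow_succ, ← mul_assoc, ← pow_add, ← two_mul, pow_mul]
      norm_num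
    have hre : 2 * ((-1:ℝ) ^ i * (aseq i / (2 * (i : ℝ) + 2))) * (-1) ^ (i + 1) *
        (z ^ i * Real.sqrt z - 1) =
        ((-1:ℝ) ^ i * (-1) ^ (i + 1)) * (2 * (aseq i / (2 * (i : ℝ) + 2)) *
        (z ^ i * Real.sqrt z - 1)) := by ring
    rw [hre, hsign, hE]
    ring
  -- the two constituent sums
  have hS1 : HasSum (fun i => 2 * E i) 2 := by
    have := hasSum_E.mul_left 2
    simpa using this
  set A : ℝ := 1 / Real.sqrt (1 - z) with hAdef
  have hf : HasSum (fun n : ℕ => aseq n * z ^ n) A := hasSum_aseq_pow z hz0 hz1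
  have hf0 : aseq 0 * z ^ 0 = 1 := by simp [aseq_zero]
  -- shifted series
  have hshift : HasSum (fun n : ℕ => aseq (n + 1) * z ^ (n + 1)) (A - 1) := by
    apply (hasSum_nat_add_iff (f := fun n : ℕ => aseq n * z ^ n) 1).mpr
    have hre : (A - 1) + ∑ i ∈ Finset.range 1, (aseq i * z ^ i) = A := by
      rw [Finset.sum_range_one, hf0]; ring
    rw [hre]
    exact hf
  have hshift' : HasSum (fun n : ℕ => aseq (n + 1) * z ^ n) ((A - 1) / z) := by
    have hmul := hshift.mul_left z⁻¹
    have heq : ∀ n : ℕ, aseq (n + 1) * z ^ n = z⁻¹ * (aseq (n + 1) * z ^ (n + 1)) := by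
      intro n
      rw [pow_succ]
      field_simp
    rw [show (A - 1) / z = z⁻¹ * (A - 1) by rw [div_eq_inv_mul]]
    exact hmul.congr_fun heq
  have htel : ∀ i : ℕ, E i = aseq i - aseq (i + 1) := by
    intro i
    rw [hE]
    simp only
    rw [aseq_succ]
    have h3 : (2 * (i : ℝ) + 2) ≠ 0 := by positivity
    field_simp
    ring
  have hS2 : HasSum (fun i : ℕ => E i * z ^ i) (A - (A - 1) / z) := by
    have hsub := hf.sub hshift'
    apply hsub.congr_fun
    intro n
    rw [htel n]
    ring
  -- combine
  have hcomb : HasSum (fun i : ℕ => 2 * E i - 2 * Real.sqrt z * (E i * z ^ i))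
      (2 - 2 * Real.sqrt z * (A - (A - 1) / z)) :=
    hS1.sub (hS2.mul_left (2 * Real.sqrt z))
  have hfinal : 2 - 2 * Real.sqrt z * (A - (A - 1) / z) =
      2 * (1 - Real.sqrt z / (1 + Real.sqrt (1 - z))) := by
    set s := Real.sqrt (1 - z) with hs
    set t := Real.sqrt z with ht
    have hs2 : s * s = 1 - z := Real.mul_self_sqrt h1z.le
    have ht2 : t * t = z := Real.mul_self_sqrt hz0.le
    have hspos : 0 < s := Real.sqrt_pos.mpr h1z
    have htpos : 0 < t := Real.sqrt_pos.mpr hz0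
    have h1s : (0:ℝ) < 1 + s := by linarith
    rw [hAdef]
    field_simp
    nlinarith [hs2, ht2, hspos, htpos, mul_pos hspos htpos]
  rw [← hfinal]
  apply hcomb.congr_fun
  intro i
  exact hterm i
end

section
/- For every z with 0 < z < 1, the series Σ_{i=1}^{∞} binom(−1/2, i) (−1)^i [ ((−1/2 − i)/(1/2 − i)) (z^{i − 1/2} − 1) − (z^{i + 1/2} − 1) ] converges and equals −2 + (3/2) z^{1/2} + z^{3/2}/(2 (1 + √(1 − z))²). -/
open Real

lemma slit_aux {w : ℂ} (hw : w ∈ Metric.ball (0:ℂ) 1) : (1 - w) ∈ Complex.slitPlane := by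
  rw [Metric.mem_ball, dist_zero_right] at hw
  refine Or.inl ?_
  have h1 : |w.re| ≤ ‖w‖ := Complex.abs_re_le_norm w
  have : w.re < 1 := lt_of_le_of_lt (le_trans (le_abs_self _) h1) hw
  simp [Complex.sub_re]
  linarith

lemma iteratedDeriv_one_sub_cpow (s : ℂ) (n : ℕ) :
    ∀ w ∈ Metric.ball (0:ℂ) 1,
      iteratedDeriv n (fun w : ℂ => (1 - w) ^ s) w
        = (∏ k ∈ Finset.range n, (s - k)) * (-1) ^ n * (1 - w) ^ (s - n) := by
  induction n with
  | zero => intro w hw; simp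
  | succ n ih =>
    intro w hw
    have hw' : (1 - w) ∈ Complex.slitPlane := slit_aux hw
    rw [iteratedDeriv_succ]
    have heq : deriv (iteratedDeriv n fun w : ℂ => (1 - w) ^ s) w
        = deriv (fun w : ℂ => (∏ k ∈ Finset.range n, (s - k)) * (-1) ^ n * ((1 - w) ^ (s - n))) w := by
      apply Filter.EventuallyEq.deriv_eq
      refine Filter.eventuallyEq_of_mem (Metric.isOpen_ball.mem_nhds hw) ?_
      intro x hx
      simp only
      rw [ih x hx, mul_assoc]
    rw [heq]
    have h1 : HasDerivAt (fun w : ℂ => 1 - w) (-1) w := by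
      simpa using (hasDerivAt_id w).const_sub (1:ℂ)
    have hd := (h1.cpow_const (c := s - n) hw').const_mul ((∏ k ∈ Finset.range n, (s - k)) * (-1) ^ n)
    rw [hd.deriv, Finset.prod_range_succ,
      show s - ((n+1 : ℕ):ℂ) = s - n - 1 by push_cast; ring]
    ring

lemma hasSum_one_sub_cpow (s : ℂ) {z : ℂ} (hz : ‖z‖ < 1) :
    HasSum (fun n : ℕ => (∏ k ∈ Finset.range n, (s - k)) * (-1) ^ n / (n.factorial : ℂ) * z ^ n)
      ((1 - z) ^ s) := by
  have hdiff : DifferentiableOn ℂ (fun w : ℂ => (1 - w) ^ s) (Metric.ball 0 1) := by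
    intro w hw
    have h1 : HasDerivAt (fun w : ℂ => 1 - w) (-1) w := by
      simpa using (hasDerivAt_id w).const_sub (1:ℂ)
    exact (h1.cpow_const (slit_aux hw)).differentiableAt.differentiableWithinAt
  have H := Complex.hasSum_taylorSeries_on_ball hdiff
    (z := z) (by rwa [Metric.mem_ball, dist_zero_right])
  have H2 : HasSum (fun n : ℕ => (n.factorial : ℂ)⁻¹ • z ^ n •
      ((∏ k ∈ Finset.range n, (s - k)) * (-1) ^ n * (1 - (0:ℂ)) ^ (s - n))) ((1 - z) ^ s) := by
    refine H.congr_fun fun n => ?_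
    rw [iteratedDeriv_one_sub_cpow s n 0 (by simp), sub_zero]
    rw [sub_zero]
  refine H2.congr_fun fun n => ?_
  rw [sub_zero, Complex.one_cpow]
  simp only [smul_eq_mul]
  ring

lemma hasSum_one_sub_rpow (s : ℝ) {z : ℝ} (h0 : 0 ≤ z) (h1 : z < 1) :
    HasSum (fun n : ℕ => (∏ k ∈ Finset.range n, (s - k)) * (-1) ^ n / (n.factorial : ℝ) * z ^ n)
      ((1 - z) ^ s) := by
  have hz : ‖(z:ℂ)‖ < 1 := by
    rw [Complex.norm_real, Real.norm_eq_abs, abs_of_nonneg h0]; exact h1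
  have H := hasSum_one_sub_cpow (s:ℂ) hz
  rw [← Complex.hasSum_ofReal]
  have e : (((1 - z : ℝ) ^ s : ℝ) : ℂ) = (1 - (z:ℂ)) ^ (s:ℂ) := by
    rw [Complex.ofReal_cpow (by linarith) s]; push_cast; ring_nf
  rw [e]
  refine H.congr_fun fun n => ?_
  push_cast
  ring

noncomputable def Bb (n : ℕ) : ℝ := genBinom (-1/2) n * (-1)^n

lemma Bb_zero : Bb 0 = 1 := by simp [Bb, genBinom]

lemma Bb_succ (n : ℕ) : Bb (n+1) = Bb n * (2*n+1) / (2*n+2) := by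
  have hf : ((n.factorial : ℝ)) ≠ 0 := Nat.cast_ne_zero.mpr n.factorial_ne_zero
  have h2 : ((n:ℝ) + 1) ≠ 0 := by positivity
  unfold Bb genBinom
  rw [Finset.prod_range_succ, Nat.factorial_succ]
  push_cast
  field_simp
  ring

lemma Bb_pos (n : ℕ) : 0 < Bb n := by
  induction n with
  | zero => simp [Bb_zero]
  | succ n ih =>
    rw [Bb_succ]
    positivity

lemma Bb_sub (n : ℕ) : Bb n - Bb (n+1) = Bb n / (2*(n:ℝ)+2) := by
  rw [Bb_succ]
  have h2 : (2*(n:ℝ)+2) ≠ 0 := by positivity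
  field_simp
  ring

lemma Bb_sq (n : ℕ) : Bb n ^ 2 * (2*(n:ℝ)+1) ≤ 1 := by
  induction n with
  | zero => simp [Bb_zero]
  | succ n ih =>
    rw [Bb_succ]
    have h2 : (0:ℝ) < 2*(n:ℝ)+2 := by positivity
    have key : Bb n^2*(2*(n:ℝ)+1)*((2*(n:ℝ)+1)*(2*(n:ℝ)+3)) ≤ 1*((2*(n:ℝ)+1)*(2*(n:ℝ)+3)) :=
      mul_le_mul_of_nonneg_right ih (by positivity)
    rw [div_pow, div_mul_eq_mul_div, div_le_one (by positivity)]
    push_cast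
    nlinarith [key, sq_nonneg (Bb n)]

lemma Bb_tendsto : Filter.Tendsto Bb Filter.atTop (nhds 0) := by
  have h1 : ∀ n : ℕ, Bb n ^ 2 ≤ 1/(2*(n:ℝ)+1) := by
    intro n
    rw [le_div_iff₀ (by positivity)]
    exact Bb_sq n
  have hA : Filter.Tendsto (fun n : ℕ => 1/((2*(n:ℝ))+1)) Filter.atTop (nhds 0) := by
    apply squeeze_zero (fun n => by positivity) (g := fun n : ℕ => 1/((n:ℝ)+1))
      (fun n => one_div_le_one_div_of_le (by positivity) (by push_cast; linarith [Nat.cast_nonneg (α := ℝ) n]))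
    exact tendsto_one_div_add_atTop_nhds_zero_nat
  have hsq : Filter.Tendsto (fun n => Bb n^2) Filter.atTop (nhds 0) :=
    squeeze_zero (fun n => sq_nonneg _) (fun n => by simpa using h1 n) (by simpa using hA)
  have := (Real.continuous_sqrt.tendsto' 0 0 (by simp)).comp hsq
  exact this.congr fun n => Real.sqrt_sq (Bb_pos n).le

theorem stmt_13 (z : ℝ) (hz0 : 0 < z) (hz1 : z < 1) :
    HasSum
      (fun i : ℕ =>
        genBinom (-1/2) (i+1) * (-1)^(i+1) *
          (((-1/2 - ((i:ℝ) + 1)) / (1/2 - ((i:ℝ) + 1))) * (z ^ ((i:ℝ) + 1 - 1/2) - 1) -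
            (z ^ ((i:ℝ) + 1 + 1/2) - 1)))
      (-2 + 3/2 * Real.sqrt z + z ^ ((3:ℝ)/2) / (2 * (1 + Real.sqrt (1 - z))^2)) := by
  have h0' : (0:ℝ) ≤ z := hz0.le
  have h1z : (0:ℝ) < 1 - z := by linarith
  set u := Real.sqrt z with hu
  set s := Real.sqrt (1-z) with hs
  have hupos : 0 < u := Real.sqrt_pos.mpr hz0
  have hspos : 0 < s := Real.sqrt_pos.mpr h1z
  have hu2 : u^2 = z := Real.sq_sqrt h0'
  have hs2 : s^2 = 1 - z := Real.sq_sqrt h1z.le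
  -- Series 1
  have S1full : HasSum (fun n : ℕ => Bb n * z ^ n) ((1-z) ^ ((-1/2 : ℝ))) := by
    refine (hasSum_one_sub_rpow (-1/2) h0' hz1).congr_fun fun n => ?_
    unfold Bb genBinom; ring
  have S1 : HasSum (fun n : ℕ => Bb (n+1) * z ^ (n+1)) ((1-z) ^ ((-1/2 : ℝ)) - 1) := by
    have h := (hasSum_nat_add_iff' (f := fun n => Bb n * z ^ n) 1).mpr S1full
    simpa [Bb_zero] using h
  -- Series 2
  have S2full : HasSum (fun n : ℕ =>
      (∏ k ∈ Finset.range n, ((1/2:ℝ) - k)) * (-1)^n / n.factorial * z ^ n) s := by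
    have h := hasSum_one_sub_rpow (1/2) h0' hz1
    rw [hs, Real.sqrt_eq_rpow]
    exact h
  have key2 : ∀ n : ℕ,
      (∏ k ∈ Finset.range (n+1), ((1/2:ℝ) - k)) * (-1)^(n+1) / (n+1).factorial * z^(n+1)
        = -((Bb n - Bb (n+1)) * z^(n+1)) := by
    intro n
    have hp : (∏ k ∈ Finset.range n, ((1/2:ℝ) - ((k+1 : ℕ) : ℝ)))
        = ∏ k ∈ Finset.range n, ((-1/2:ℝ) - k) :=
      Finset.prod_congr rfl fun k _ => by push_cast; ring
    rw [Finset.prod_range_succ', Bb_sub]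
    unfold Bb genBinom
    rw [Nat.factorial_succ]
    have hf : ((n.factorial : ℝ)) ≠ 0 := Nat.cast_ne_zero.mpr n.factorial_ne_zero
    have h2 : ((n:ℝ) + 1) ≠ 0 := by positivity
    have h3 : (2*(n:ℝ)+2) ≠ 0 := by positivity
    rw [hp]
    field_simp
    push_cast; ring
  have S2shift : HasSum (fun n : ℕ => (Bb n - Bb (n+1)) * z ^ (n+1)) (1 - s) := by
    have hstep := ((hasSum_nat_add_iff'
      (f := fun n => (∏ k ∈ Finset.range n, ((1/2:ℝ) - k)) * (-1)^n / n.factorial * z ^ n)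
      1).mpr S2full).neg
    have hval : -(s - ∑ i ∈ Finset.range 1,
        (∏ k ∈ Finset.range i, ((1/2:ℝ) - k)) * (-1)^i / i.factorial * z ^ i) = 1 - s := by
      simp
    rw [hval] at hstep
    refine hstep.congr_fun fun n => ?_
    show (Bb n - Bb (n+1)) * z ^ (n+1)
      = -((∏ k ∈ Finset.range (n+1), ((1/2:ℝ) - k)) * (-1)^(n+1) / (n+1).factorial * z ^ (n+1))
    rw [key2 n, neg_neg]
  -- Series 3
  have S3 : HasSum (fun n : ℕ => Bb n - Bb (n+1)) 1 := by
    rw [hasSum_iff_tendsto_nat_of_nonneg (fun n => by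
      rw [Bb_sub]; have := (Bb_pos n).le; positivity)]
    have hsum : ∀ n, ∑ i ∈ Finset.range n, (Bb i - Bb (i+1)) = 1 - Bb n := by
      intro n
      rw [Finset.sum_range_sub' Bb n, Bb_zero]
    simp only [hsum]
    simpa using tendsto_const_nhds.sub Bb_tendsto
  -- combine
  have H := ((S1.mul_left (1/u - u)).add (S2shift.mul_left (2/u))).add (S3.mul_left (-2))
  have e4 : (1-z) ^ ((-1/2 : ℝ)) = s⁻¹ := by
    rw [hs, show ((-1/2:ℝ)) = -(1/2) by norm_num, Real.rpow_neg h1z.le, ← Real.sqrt_eq_rpow]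
  have e3 : z ^ ((3:ℝ)/2) = u^3 := by
    rw [show ((3:ℝ)/2) = (1/2) * ((3:ℕ):ℝ) by norm_num, Real.rpow_mul h0',
      ← Real.sqrt_eq_rpow, Real.rpow_natCast, hu]
  have hus : s^2 = 1 - u^2 := by rw [hu2]; exact hs2
  have hval : (-2 + 3/2 * Real.sqrt z + z ^ ((3:ℝ)/2) / (2 * (1 + Real.sqrt (1-z))^2))
      = ((1/u - u) * ((1-z)^((-1/2:ℝ)) - 1) + (2/u) * (1 - s)) + (-2) * 1 := by
    rw [e4, e3, ← hu, ← hs]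
    have h1s : (1:ℝ) + s ≠ 0 := by positivity
    field_simp
    linear_combination (4*s^2 + u^2*s + 6*s + 2) * hus
  rw [hval]
  refine H.congr_fun fun n => ?_
  have e1 : z ^ ((n:ℝ) + 1 - 1/2) = z ^ (n+1 : ℕ) / u := by
    rw [show ((n:ℝ)+1-1/2) = ((n+1:ℕ):ℝ) - 1/2 by push_cast; ring, Real.rpow_sub hz0,
      Real.rpow_natCast, ← Real.sqrt_eq_rpow, hu]
  have e2 : z ^ ((n:ℝ) + 1 + 1/2) = z ^ (n+1 : ℕ) * u := by
    rw [show ((n:ℝ)+1+1/2) = ((n+1:ℕ):ℝ) + 1/2 by push_cast; ring, Real.rpow_add hz0,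
      Real.rpow_natCast, ← Real.sqrt_eq_rpow, hu]
  have hden : ((1:ℝ)/2 - ((n:ℝ)+1)) ≠ 0 := by
    have : (0:ℝ) ≤ (n:ℝ) := Nat.cast_nonneg n
    intro h; nlinarith
  have hden2 : (2*(n:ℝ)+1) ≠ 0 := by positivity
  have hfrac : (-1/2 - ((n:ℝ)+1)) / (1/2 - ((n:ℝ)+1)) = (2*(n:ℝ)+3)/(2*(n:ℝ)+1) := by
    rw [div_eq_div_iff hden hden2]; ring
  rw [show genBinom (-1/2) (n+1) * ((-1:ℝ))^(n+1) = Bb (n+1) from rfl, e1, e2, hfrac]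
  rw [Bb_sub n, Bb_succ n]
  have h3 : (2*(n:ℝ)+2) ≠ 0 := by positivity
  field_simp
  ring
end
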